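/- For all n ≥ 1, the Eulerian polynomial A_n(t) = Σ_{π ∈ S_n} t^{des(π)} evaluated at t = -1 equals (-1)^((n-1)/2) · E_n if n is odd, and 0 if n is even, where E_n is the n-th Euler number (coefficient of x^n/n! in sec(x) + tan(x)). -/

import Mathlib

/-- The one-line word of a permutation, with boundary convention
`π₀ = π_{n+1} = ∞` (here `∞` is represented by `n + 2`, larger than all letters,
which take values in `1, …, n`). -/
def wrd (n : ℕ) (π : Equiv.Perm (Fin n)) (i : ℕ) : ℕ :=
  if h : 1 ≤ i ∧ i ≤ n then ((π ⟨i - 1, by omega⟩ : Fin n) : ℕ) + 1 else n + 2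

lemma wrd_mem {n : ℕ} (σ : Equiv.Perm (Fin n)) {i : ℕ} (h1 : 1 ≤ i) (h2 : i ≤ n) :
    1 ≤ wrd n σ i ∧ wrd n σ i ≤ n := by
  unfold wrd
  rw [dif_pos ⟨h1, h2⟩]
  have := (σ ⟨i - 1, by omega⟩).isLt
  omega

lemma wrd_out {n : ℕ} (σ : Equiv.Perm (Fin n)) {i : ℕ} (h : ¬(1 ≤ i ∧ i ≤ n)) :
    wrd n σ i = n + 2 := by
  unfold wrd; rw [dif_neg h]

lemma wrd_inj {n : ℕ} (σ : Equiv.Perm (Fin n)) {i j : ℕ} (hi1 : 1 ≤ i) (hi2 : i ≤ n)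
    (hj1 : 1 ≤ j) (hj2 : j ≤ n) (h : wrd n σ i = wrd n σ j) : i = j := by
  unfold wrd at h
  rw [dif_pos ⟨hi1, hi2⟩, dif_pos ⟨hj1, hj2⟩] at h
  have h2 : σ ⟨i - 1, by omega⟩ = σ ⟨j - 1, by omega⟩ := by
    apply Fin.ext; omega
  have := σ.injective h2
  have := Fin.mk.injEq (i - 1) (by omega : i - 1 < n) (j - 1) (by omega : j - 1 < n)
  rw [Fin.mk.injEq] at this
  have h3 : i - 1 = j - 1 := by
    have := congrArg Fin.val (σ.injective h2)
    simpa using this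
  omega

/-- position of value `v` in the word of `σ` -/
def posv (n : ℕ) (σ : Equiv.Perm (Fin n)) (v : ℕ) : ℕ :=
  if h : 1 ≤ v ∧ v ≤ n then ((σ⁻¹ ⟨v - 1, by omega⟩ : Fin n) : ℕ) + 1 else 0

lemma posv_mem {n : ℕ} (σ : Equiv.Perm (Fin n)) {v : ℕ} (h1 : 1 ≤ v) (h2 : v ≤ n) :
    1 ≤ posv n σ v ∧ posv n σ v ≤ n := by
  unfold posv
  rw [dif_pos ⟨h1, h2⟩]
  have := (σ⁻¹ ⟨v - 1, by omega⟩).isLt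
  omega

lemma posv_def {n : ℕ} (σ : Equiv.Perm (Fin n)) {v : ℕ} (h1 : 1 ≤ v) (h2 : v ≤ n) :
    posv n σ v = ((σ⁻¹ ⟨v - 1, by omega⟩ : Fin n) : ℕ) + 1 := dif_pos ⟨h1, h2⟩

lemma wrd_posv {n : ℕ} (σ : Equiv.Perm (Fin n)) {v : ℕ} (h1 : 1 ≤ v) (h2 : v ≤ n) :
    wrd n σ (posv n σ v) = v := by
  have hlt := (σ⁻¹ (⟨v - 1, by omega⟩ : Fin n)).isLt
  rw [posv_def σ h1 h2]
  unfold wrd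
  rw [dif_pos ⟨by omega, by omega⟩]
  have : (⟨(σ⁻¹ (⟨v - 1, by omega⟩ : Fin n) : ℕ) + 1 - 1, by omega⟩ : Fin n)
      = σ⁻¹ ⟨v - 1, by omega⟩ := by
    apply Fin.ext; simp
  rw [this, Equiv.Perm.inv_def, Equiv.apply_symm_apply]
  simp
  omega

lemma posv_eq {n : ℕ} (σ : Equiv.Perm (Fin n)) {v q : ℕ} (hq1 : 1 ≤ q) (hq2 : q ≤ n)
    (h : wrd n σ q = v) : posv n σ v = q := by
  have hv := wrd_mem σ hq1 hq2
  rw [h] at hv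
  have hm := posv_mem σ hv.1 hv.2
  have := wrd_posv σ hv.1 hv.2
  exact wrd_inj σ hm.1 hm.2 hq1 hq2 (by rw [this, h])

/-- value `v` is a "double ascent" or "double descent" in the word of `σ`
(with the convention that positions `0` and `n+1` hold `∞`). -/
def bad (n : ℕ) (σ : Equiv.Perm (Fin n)) (v : ℕ) : Prop :=
  ¬ ((v < wrd n σ (posv n σ v - 1)) ↔ (v < wrd n σ (posv n σ v + 1)))

instance (n : ℕ) (σ : Equiv.Perm (Fin n)) : DecidablePred (bad n σ) := fun v => by
  unfold bad; infer_instance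

def badF (n : ℕ) (σ : Equiv.Perm (Fin n)) : Finset ℕ :=
  (Finset.Icc 1 n).filter (bad n σ)

/-- the cycle `(s, s+1, …, t)` on 0-indexed positions. -/
def cyc (n s t : ℕ) : Equiv.Perm (Fin n) where
  toFun j := ⟨if s ≤ (j : ℕ) ∧ (j : ℕ) < t ∧ t < n then (j : ℕ) + 1
      else if (j : ℕ) = t ∧ s ≤ t then s else j,
    by have := j.isLt; split_ifs <;> omega⟩
  invFun j := ⟨if s < (j : ℕ) ∧ (j : ℕ) ≤ t ∧ t < n then (j : ℕ) - 1
      else if (j : ℕ) = s ∧ s ≤ t ∧ t < n then t else j,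
    by have := j.isLt; split_ifs <;> omega⟩
  left_inv := by
    intro j
    have := j.isLt
    apply Fin.ext
    simp only
    split_ifs <;> omega
  right_inv := by
    intro j
    have := j.isLt
    apply Fin.ext
    simp only
    split_ifs <;> omega

lemma cyc_val (n s t : ℕ) (j : Fin n) :
    ((cyc n s t j : Fin n) : ℕ) = if s ≤ (j : ℕ) ∧ (j : ℕ) < t ∧ t < n then (j : ℕ) + 1
      else if (j : ℕ) = t ∧ s ≤ t then s else j := rfl

lemma cyc_inv_val (n s t : ℕ) (j : Fin n) :
    (((cyc n s t)⁻¹ j : Fin n) : ℕ) = if s < (j : ℕ) ∧ (j : ℕ) ≤ t ∧ t < n then (j : ℕ) - 1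
      else if (j : ℕ) = s ∧ s ≤ t ∧ t < n then t else j := rfl

lemma wrd_mul {n : ℕ} (σ e : Equiv.Perm (Fin n)) {i : ℕ} (h1 : 1 ≤ i) (h2 : i ≤ n) :
    wrd n (σ * e) i = wrd n σ (((e ⟨i - 1, by omega⟩ : Fin n) : ℕ) + 1) := by
  have hlt := (e ⟨i - 1, by omega⟩).isLt
  unfold wrd
  rw [dif_pos ⟨h1, h2⟩, dif_pos ⟨by omega, by omega⟩]
  simp only [Equiv.Perm.mul_apply]
  have : (⟨((e ⟨i - 1, by omega⟩ : Fin n) : ℕ) + 1 - 1, by omega⟩ : Fin n)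
      = e ⟨i - 1, by omega⟩ := Fin.ext (by simp)
  rw [this]

/-- configuration: `x` sits at the left end `a` of its block `[a, b]`. -/
structure Cfg (n : ℕ) (σ : Equiv.Perm (Fin n)) (x a b : ℕ) : Prop where
  hx1 : 1 ≤ x
  hxn : x ≤ n
  ha : 1 ≤ a
  hab : a < b
  hbn : b ≤ n
  hwa : wrd n σ a = x
  hsmall : ∀ i, a < i → i ≤ b → wrd n σ i < x
  hleft : x < wrd n σ (a - 1)
  hright : x < wrd n σ (b + 1)

/-- configuration: `x` sits at the right end `b` of its block `[a, b]`. -/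
structure Cfg' (n : ℕ) (σ : Equiv.Perm (Fin n)) (x a b : ℕ) : Prop where
  hx1 : 1 ≤ x
  hxn : x ≤ n
  ha : 1 ≤ a
  hab : a < b
  hbn : b ≤ n
  hwb : wrd n σ b = x
  hsmall : ∀ i, a ≤ i → i < b → wrd n σ i < x
  hleft : x < wrd n σ (a - 1)
  hright : x < wrd n σ (b + 1)

lemma wrd_cyc {n : ℕ} {σ : Equiv.Perm (Fin n)} {a b : ℕ}
    (ha : 1 ≤ a) (hab : a < b) (hbn : b ≤ n) (i : ℕ) :
    wrd n (σ * cyc n (a - 1) (b - 1)) i =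
      if i < a ∨ b < i then wrd n σ i
      else if i = b then wrd n σ a else wrd n σ (i + 1) := by
  by_cases hi : 1 ≤ i ∧ i ≤ n
  · rw [wrd_mul σ _ hi.1 hi.2, cyc_val]
    simp only [Fin.val_mk]
    split_ifs <;> (congr 1; omega)
  · rw [if_pos (show i < a ∨ b < i by omega), wrd_out _ hi, wrd_out σ hi]

lemma wrd_cyc_inv {n : ℕ} {σ : Equiv.Perm (Fin n)} {a b : ℕ}
    (ha : 1 ≤ a) (hab : a < b) (hbn : b ≤ n) (i : ℕ) :
    wrd n (σ * (cyc n (a - 1) (b - 1))⁻¹) i =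
      if i < a ∨ b < i then wrd n σ i
      else if i = a then wrd n σ b else wrd n σ (i - 1) := by
  by_cases hi : 1 ≤ i ∧ i ≤ n
  · rw [wrd_mul σ _ hi.1 hi.2, cyc_inv_val]
    simp only [Fin.val_mk]
    split_ifs <;> (congr 1; omega)
  · rw [if_pos (show i < a ∨ b < i by omega), wrd_out _ hi, wrd_out σ hi]

lemma cfg'_cfg {n : ℕ} {σ : Equiv.Perm (Fin n)} {x a b : ℕ} (c : Cfg' n σ x a b) :
    Cfg n (σ * (cyc n (a - 1) (b - 1))⁻¹) x a b := by
  obtain ⟨hx1, hxn, ha, hab, hbn, hwb, hsmall, hleft, hright⟩ := c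
  have W := wrd_cyc_inv (σ := σ) ha hab hbn
  refine ⟨hx1, hxn, ha, hab, hbn, ?_, ?_, ?_, ?_⟩
  · rw [W a, if_neg (by omega), if_pos rfl, hwb]
  · intro i h1 h2
    rw [W i, if_neg (by omega), if_neg (by omega)]
    exact hsmall (i - 1) (by omega) (by omega)
  · rw [W (a - 1), if_pos (by omega)]; exact hleft
  · rw [W (b + 1), if_pos (by omega)]; exact hright

/-- The number of descents of `π`: indices `1 ≤ i ≤ n - 1` with `π_i > π_{i+1}`. -/
def des (n : ℕ) (π : Equiv.Perm (Fin n)) : ℕ :=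
  ((Finset.Icc 1 (n - 1)).filter (fun i => wrd n π (i + 1) < wrd n π i)).card

lemma des_eq_sum {n : ℕ} (σ : Equiv.Perm (Fin n)) (hn : 1 ≤ n) :
    des n σ = ∑ i ∈ Finset.Ico 1 (n + 2), (if wrd n σ (i + 1) < wrd n σ i then 1 else 0) := by
  rw [des, Finset.card_filter]
  apply Finset.sum_subset
  · intro i hi
    simp only [Finset.mem_Icc] at hi
    simp only [Finset.mem_Ico]
    omega
  · intro i hi hni
    simp only [Finset.mem_Icc] at hni
    simp only [Finset.mem_Ico] at hi
    have h2 : i + 1 = n + 1 ∨ i + 1 = n + 2 := by omega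
    have : wrd n σ (i + 1) = n + 2 := wrd_out σ (by omega)
    rw [if_neg]
    rw [this]
    by_cases hin : 1 ≤ i ∧ i ≤ n
    · have := wrd_mem σ hin.1 hin.2; omega
    · have := wrd_out σ hin; omega

lemma sum_shift {M : Type*} [AddCommMonoid M] (f : ℕ → M) (a b : ℕ) :
    ∑ i ∈ Finset.Ico a b, f (i + 1) = ∑ i ∈ Finset.Ico (a + 1) (b + 1), f i := by
  rw [Finset.sum_Ico_eq_sum_range, Finset.sum_Ico_eq_sum_range]
  simp only [Nat.add_sub_add_right]
  apply Finset.sum_congr rfl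
  intro i _
  congr 1
  omega

lemma des_cfg {n : ℕ} {σ : Equiv.Perm (Fin n)} {x a b : ℕ} (c : Cfg n σ x a b) :
    des n σ = des n (σ * cyc n (a - 1) (b - 1)) + 1 := by
  obtain ⟨hx1, hxn, ha, hab, hbn, hwa, hsmall, hleft, hright⟩ := c
  have hn : 1 ≤ n := by omega
  have W := wrd_cyc (σ := σ) ha hab hbn
  set τ := σ * cyc n (a - 1) (b - 1) with hτ
  set f : ℕ → ℕ := fun i => if wrd n σ (i + 1) < wrd n σ i then 1 else 0 with hf
  set g : ℕ → ℕ := fun i => if wrd n τ (i + 1) < wrd n τ i then 1 else 0 with hg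
  rw [des_eq_sum σ hn, des_eq_sum τ hn]
  have hWlo : ∀ i, i < a ∨ b < i → wrd n τ i = wrd n σ i := by
    intro i h; rw [W i, if_pos h]
  have hWmid : ∀ i, a ≤ i → i < b → wrd n τ i = wrd n σ (i + 1) := by
    intro i h1 h2; rw [W i, if_neg (by omega), if_neg (by omega)]
  have hWb : wrd n τ b = x := by rw [W b, if_neg (by omega), if_pos rfl, hwa]
  -- pointwise facts
  have hga : ∀ i, i < a → g i = f i := by
    intro i hia
    simp only [hg, hf]
    rw [hWlo i (by omega)]
    rcases Nat.lt_or_ge (i + 1) a with h | h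
    · rw [hWlo (i + 1) (by omega)]
    · have hia' : i + 1 = a := by omega
      rw [hWmid (i + 1) (by omega) (by omega)]
      have hs : wrd n σ (i + 1 + 1) < x := hsmall (i + 1 + 1) (by omega) (by omega)
      have : wrd n σ (i + 1) = x := by rw [hia', hwa]
      have hl2 : x < wrd n σ i := by
        rw [show i = a - 1 by omega]; exact hleft
      split_ifs <;> omega
  have hgm : ∀ i, a ≤ i → i < b → g i = f (i + 1) := by
    intro i h1 h2
    simp only [hg, hf]
    rw [hWmid i h1 h2]
    rcases Nat.lt_or_ge (i + 1) b with h | h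
    · rw [hWmid (i + 1) (by omega) h]
    · have hib : i + 1 = b := by omega
      rw [hib, hWb]
      have hb : wrd n σ b < x := hsmall b (by omega) (by omega)
      have hb1 : x < wrd n σ (b + 1) := hright
      split_ifs <;> omega
  have hgb : g b = 0 := by
    simp only [hg]
    rw [hWb, hWlo (b + 1) (by omega)]
    rw [if_neg (by omega)]
  have hfa : f a = 1 := by
    simp only [hf]
    rw [hwa, if_pos (hsmall (a + 1) (by omega) (by omega))]
  have hge : ∀ i, b < i → g i = f i := by
    intro i hbi
    simp only [hg, hf]
    rw [hWlo i (by omega), hWlo (i + 1) (by omega)]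
  -- assemble
  have e4 : ∑ i ∈ Finset.Ico a b, g i = ∑ i ∈ Finset.Ico (a + 1) (b + 1), f i := by
    rw [← sum_shift]
    exact Finset.sum_congr rfl (fun i hi => by
      have := Finset.mem_Ico.mp hi
      exact hgm i this.1 this.2)
  have e5 : ∑ i ∈ Finset.Ico (b + 1) (n + 2), g i
      = ∑ i ∈ Finset.Ico (b + 1) (n + 2), f i :=
    Finset.sum_congr rfl (fun i hi => hge i (Finset.mem_Ico.mp hi).1)
  have e3 : ∑ i ∈ Finset.Ico 1 a, g i = ∑ i ∈ Finset.Ico 1 a, f i :=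
    Finset.sum_congr rfl (fun i hi => hga i (Finset.mem_Ico.mp hi).2)
  symm
  calc ∑ i ∈ Finset.Ico 1 (n + 2), g i + 1
      = (∑ i ∈ Finset.Ico 1 a, g i + (∑ i ∈ Finset.Ico a b, g i
          + (g b + ∑ i ∈ Finset.Ico (b + 1) (n + 2), g i))) + 1 := by
        rw [← Finset.sum_Ico_consecutive g (by omega : 1 ≤ a) (by omega : a ≤ n + 2),
          ← Finset.sum_Ico_consecutive g (by omega : a ≤ b) (by omega : b ≤ n + 2),
          ← Finset.sum_Ico_consecutive g (by omega : b ≤ b + 1) (by omega : b + 1 ≤ n + 2),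
          show Finset.Ico b (b + 1) = {b} from by ext j; simp only [Finset.mem_Ico, Finset.mem_singleton]; omega,
          Finset.sum_singleton]
    _ = ∑ i ∈ Finset.Ico 1 a, f i + (f a + (∑ i ∈ Finset.Ico (a + 1) (b + 1), f i
          + ∑ i ∈ Finset.Ico (b + 1) (n + 2), f i)) := by
        rw [e3, e4, e5, hgb, hfa]; ring
    _ = ∑ i ∈ Finset.Ico 1 (n + 2), f i := by
        rw [← Finset.sum_Ico_consecutive f (by omega : 1 ≤ a) (by omega : a ≤ n + 2),
          ← Finset.sum_Ico_consecutive f (by omega : a ≤ a + 1) (by omega : a + 1 ≤ n + 2),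
          ← Finset.sum_Ico_consecutive f (by omega : a + 1 ≤ b + 1) (by omega : b + 1 ≤ n + 2),
          show Finset.Ico a (a + 1) = {a} from by ext j; simp only [Finset.mem_Ico, Finset.mem_singleton]; omega,
          Finset.sum_singleton]
  

lemma bad_x_sig {n : ℕ} {σ : Equiv.Perm (Fin n)} {x a b : ℕ} (c : Cfg n σ x a b) :
    bad n σ x := by
  obtain ⟨hx1, hxn, ha, hab, hbn, hwa, hsmall, hleft, hright⟩ := c
  have pσ : posv n σ x = a := posv_eq σ (by omega) (by omega) hwa
  have hs : wrd n σ (a + 1) < x := hsmall (a + 1) (by omega) (by omega)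
  unfold bad
  rw [pσ]
  intro h
  exact absurd (h.mp hleft) (by omega)

lemma bad_x_tau {n : ℕ} {σ : Equiv.Perm (Fin n)} {x a b : ℕ} (c : Cfg n σ x a b) :
    bad n (σ * cyc n (a - 1) (b - 1)) x := by
  obtain ⟨hx1, hxn, ha, hab, hbn, hwa, hsmall, hleft, hright⟩ := c
  have W := wrd_cyc (σ := σ) ha hab hbn
  set τ := σ * cyc n (a - 1) (b - 1) with hτ
  have hWb : wrd n τ b = x := by rw [W b, if_neg (by omega), if_pos rfl, hwa]
  have pτ : posv n τ x = b := posv_eq τ (by omega) (by omega) hWb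
  have hL : wrd n τ (b - 1) = wrd n σ b := by
    rw [W (b - 1), if_neg (by omega), if_neg (by omega), show b - 1 + 1 = b by omega]
  have hR : wrd n τ (b + 1) = wrd n σ (b + 1) := by rw [W (b + 1), if_pos (by omega)]
  have hs : wrd n σ b < x := hsmall b (by omega) (by omega)
  unfold bad
  rw [pτ, hL, hR]
  intro h
  exact absurd (h.mpr hright) (by omega)

lemma posv_tau_x {n : ℕ} {σ : Equiv.Perm (Fin n)} {x a b : ℕ} (c : Cfg n σ x a b) :
    posv n (σ * cyc n (a - 1) (b - 1)) x = b := by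
  obtain ⟨hx1, hxn, ha, hab, hbn, hwa, hsmall, hleft, hright⟩ := c
  have W := wrd_cyc (σ := σ) ha hab hbn
  exact posv_eq _ (by omega) (by omega)
    (by rw [W b, if_neg (by omega), if_pos rfl, hwa])

lemma bad_cfg {n : ℕ} {σ : Equiv.Perm (Fin n)} {x a b : ℕ} (c : Cfg n σ x a b)
    {v : ℕ} (hv1 : 1 ≤ v) (hvn : v ≤ n) (hvx : v ≠ x) :
    bad n (σ * cyc n (a - 1) (b - 1)) v ↔ bad n σ v := by
  obtain ⟨hx1, hxn, ha, hab, hbn, hwa, hsmall, hleft, hright⟩ := c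
  have W := wrd_cyc (σ := σ) ha hab hbn
  set τ := σ * cyc n (a - 1) (b - 1) with hτ
  have hWlo : ∀ i, i < a ∨ b < i → wrd n τ i = wrd n σ i := by
    intro i h; rw [W i, if_pos h]
  have hWmid : ∀ i, a ≤ i → i < b → wrd n τ i = wrd n σ (i + 1) := by
    intro i h1 h2; rw [W i, if_neg (by omega), if_neg (by omega)]
  have hWb : wrd n τ b = x := by rw [W b, if_neg (by omega), if_pos rfl, hwa]
  set r := posv n σ v with hrr
  have hrm : 1 ≤ r ∧ r ≤ n := posv_mem σ hv1 hvn
  have hr : wrd n σ r = v := wrd_posv σ hv1 hvn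
  have hra : r ≠ a := fun h => hvx (by rw [← hr, h, hwa])
  unfold bad
  rcases Nat.lt_or_ge r a with h1 | h1
  · -- r < a
    have pτ : posv n τ v = r := posv_eq τ hrm.1 hrm.2 (by rw [hWlo r (by omega), hr])
    rw [pτ, ← hrr, hWlo (r - 1) (by omega)]
    rcases Nat.lt_or_ge (r + 1) a with h2 | h2
    · rw [hWlo (r + 1) (by omega)]
    · -- r + 1 = a
      have hre : r + 1 = a := by omega
      have hRv : wrd n τ (r + 1) = wrd n σ (r + 1 + 1) := by
        rw [hWmid (r + 1) (by omega) (by omega)]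
      have hxv : x < v := by
        rw [← hr, show r = a - 1 by omega]; exact hleft
      have hs : wrd n σ (r + 1 + 1) < x :=
        hsmall (r + 1 + 1) (by omega) (by omega)
      have hwx : wrd n σ (r + 1) = x := by rw [hre, hwa]
      rw [hRv]
      constructor <;> intro h hiff <;> apply h
      · exact iff_of_false (by omega) (by omega)
      · exact iff_of_false (by omega) (by omega)
  · rcases Nat.lt_or_ge b r with h2 | h2
    · -- b < r
      have pτ : posv n τ v = r := posv_eq τ hrm.1 hrm.2 (by rw [hWlo r (by omega), hr])
      rw [pτ, ← hrr, hWlo (r + 1) (by omega)]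
      rcases Nat.lt_or_ge (b + 1) r with h3 | h3
      · rw [hWlo (r - 1) (by omega)]
      · -- r = b + 1
        have hre : r = b + 1 := by omega
        have hLv : wrd n τ (r - 1) = x := by rw [show r - 1 = b by omega, hWb]
        have hxv : x < v := by rw [← hr, hre]; exact hright
        have hs : wrd n σ (r - 1) < x := by
          rw [show r - 1 = b by omega]; exact hsmall b (by omega) (by omega)
        rw [hLv]
        constructor <;> intro h hiff <;> apply h
        · exact iff_of_false (by omega) (by omega)
        · exact iff_of_false (by omega) (by omega)
    · -- a < r ≤ b  (r ≠ a)
      have hrab : a < r := by omega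
      have hvx2 : v < x := by rw [← hr]; exact hsmall r hrab h2
      have pτ : posv n τ v = r - 1 := posv_eq τ (by omega) (by omega)
        (by rw [hWmid (r - 1) (by omega) (by omega), show r - 1 + 1 = r by omega, hr])
      rw [pτ, ← hrr]
      have hL : (v < wrd n τ (r - 1 - 1)) ↔ (v < wrd n σ (r - 1)) := by
        rcases Nat.lt_or_ge (a + 1) r with h4 | h4
        · rw [hWmid (r - 1 - 1) (by omega) (by omega), show r - 1 - 1 + 1 = r - 1 by omega]
        · -- r = a + 1
          have : wrd n τ (r - 1 - 1) = wrd n σ (a - 1) := by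
            rw [show r - 1 - 1 = a - 1 by omega]; exact hWlo (a - 1) (by omega)
          rw [this]
          have : wrd n σ (r - 1) = x := by rw [show r - 1 = a by omega, hwa]
          rw [this]
          exact iff_of_true (by omega) (by omega)
      have hR : (v < wrd n τ (r - 1 + 1)) ↔ (v < wrd n σ (r + 1)) := by
        rw [show r - 1 + 1 = r by omega]
        rcases Nat.lt_or_ge r b with h4 | h4
        · rw [hWmid r (by omega) h4]
        · -- r = b
          have : wrd n τ r = x := by rw [show r = b by omega, hWb]
          rw [this]
          have : x < wrd n σ (r + 1) := by rw [show r = b by omega]; exact hright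
          exact iff_of_true (by omega) (by omega)
      rw [hL, hR]

lemma badF_cfg {n : ℕ} {σ : Equiv.Perm (Fin n)} {x a b : ℕ} (c : Cfg n σ x a b) :
    badF n (σ * cyc n (a - 1) (b - 1)) = badF n σ := by
  ext v
  unfold badF
  simp only [Finset.mem_filter, Finset.mem_Icc]
  constructor <;> rintro ⟨hm, hb⟩ <;> refine ⟨hm, ?_⟩
  · by_cases hvx : v = x
    · subst hvx; exact bad_x_sig c
    · exact (bad_cfg c hm.1 hm.2 hvx).mp hb
  · by_cases hvx : v = x
    · subst hvx; exact bad_x_tau c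
    · exact (bad_cfg c hm.1 hm.2 hvx).mpr hb

def rendEx (n : ℕ) (σ : Equiv.Perm (Fin n)) (q x : ℕ) :
    ∃ j, q < j ∧ (x < wrd n σ j ∨ n + 1 ≤ j) :=
  ⟨max (n + 1) (q + 1), by omega, Or.inr (by omega)⟩

/-- the position just after the block of `x` starting at `q`. -/
def rend (n : ℕ) (σ : Equiv.Perm (Fin n)) (q x : ℕ) : ℕ := Nat.find (rendEx n σ q x)

/-- the position just before the block of `x` ending at `q`. -/
def lend (n : ℕ) (σ : Equiv.Perm (Fin n)) (q x : ℕ) : ℕ :=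
  Nat.findGreatest (fun j => x < wrd n σ j) (q - 1)

lemma rend_key (n : ℕ) (σ : Equiv.Perm (Fin n)) (q x : ℕ) :
    (q < rend n σ q x ∧ (x < wrd n σ (rend n σ q x) ∨ n + 1 ≤ rend n σ q x)) ∧
      ∀ j < rend n σ q x, ¬ (q < j ∧ (x < wrd n σ j ∨ n + 1 ≤ j)) := by
  have h : rend n σ q x = rend n σ q x := rfl
  unfold rend at h
  rw [Nat.find_eq_iff] at h
  exact h

lemma lend_key (n : ℕ) (σ : Equiv.Perm (Fin n)) (q x : ℕ) :
    lend n σ q x ≤ q - 1 ∧ (lend n σ q x ≠ 0 → x < wrd n σ (lend n σ q x)) ∧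
      ∀ ⦃j : ℕ⦄, lend n σ q x < j → j ≤ q - 1 → ¬ x < wrd n σ j := by
  have h : lend n σ q x = lend n σ q x := rfl
  unfold lend at h
  conv at h => rw [Nat.findGreatest_eq_iff]
  exact h

noncomputable def psi (n : ℕ) (σ : Equiv.Perm (Fin n)) : Equiv.Perm (Fin n) :=
  if h : (badF n σ).Nonempty then
    if wrd n σ (posv n σ ((badF n σ).min' h) + 1) < (badF n σ).min' h then
      σ * cyc n (posv n σ ((badF n σ).min' h) - 1)
        (rend n σ (posv n σ ((badF n σ).min' h)) ((badF n σ).min' h) - 2)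
    else
      σ * (cyc n (lend n σ (posv n σ ((badF n σ).min' h)) ((badF n σ).min' h))
        (posv n σ ((badF n σ).min' h) - 1))⁻¹
  else σ

section PsiLemmas

variable {n : ℕ} {σ : Equiv.Perm (Fin n)}

lemma min'_badF_mem (h : (badF n σ).Nonempty) :
    1 ≤ (badF n σ).min' h ∧ (badF n σ).min' h ≤ n ∧ bad n σ ((badF n σ).min' h) := by
  have := (badF n σ).min'_mem h
  unfold badF at this
  rw [Finset.mem_filter, Finset.mem_Icc] at this
  exact ⟨this.1.1, this.1.2, this.2⟩

lemma cfg_dd (h : (badF n σ).Nonempty)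
    (hbr : wrd n σ (posv n σ ((badF n σ).min' h) + 1) < (badF n σ).min' h) :
    Cfg n σ ((badF n σ).min' h) (posv n σ ((badF n σ).min' h))
      (rend n σ (posv n σ ((badF n σ).min' h)) ((badF n σ).min' h) - 1) := by
  obtain ⟨hx1, hxn, hbad⟩ := min'_badF_mem h
  set x := (badF n σ).min' h with hx
  set q := posv n σ x with hq
  have hqm : 1 ≤ q ∧ q ≤ n := posv_mem σ hx1 hxn
  have hwq : wrd n σ q = x := wrd_posv σ hx1 hxn
  obtain ⟨⟨hRq, hRor⟩, hRmin⟩ := rend_key n σ q x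
  set R := rend n σ q x with hR
  have hRle : R ≤ n + 1 := by
    by_contra hc
    exact hRmin (n + 1) (by omega) ⟨by omega, Or.inr (by omega)⟩
  have hq1n : q + 1 ≤ n := by
    by_contra hc
    rw [wrd_out σ (by omega)] at hbr
    omega
  have hminR : ∀ j, q < j → j < R → wrd n σ j < x := by
    intro j h1 h2
    have h3 := hRmin j h2
    push_neg at h3
    obtain ⟨h4, h5⟩ := h3 h1
    rcases Nat.lt_or_ge (wrd n σ j) x with h6 | h6
    · exact h6
    · exfalso
      have h7 : wrd n σ j = x := by omega
      have := wrd_inj σ (by omega : 1 ≤ j) (by omega) hqm.1 hqm.2 (by rw [h7, hwq])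
      omega
  have hRw : x < wrd n σ R := by
    rcases hRor with h1 | h1
    · exact h1
    · have : R = n + 1 := by omega
      rw [this, wrd_out σ (by omega)]
      omega
  have hRq2 : q + 2 ≤ R := by
    rcases Nat.lt_or_ge (q + 1) R with h1 | h1
    · omega
    · have : R = q + 1 := by omega
      rw [this] at hRw
      omega
  have hleft : x < wrd n σ (q - 1) := by
    unfold bad at hbad
    rw [← hq] at hbad
    by_contra hc
    exact hbad (iff_of_false hc (by omega))
  refine ⟨hx1, hxn, hqm.1, by omega, by omega, hwq, ?_, hleft, ?_⟩
  · intro i h1 h2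
    exact hminR i h1 (by omega)
  · rw [show R - 1 + 1 = R by omega]
    exact hRw

lemma cfg_da (h : (badF n σ).Nonempty)
    (hbr : ¬ wrd n σ (posv n σ ((badF n σ).min' h) + 1) < (badF n σ).min' h) :
    Cfg' n σ ((badF n σ).min' h)
      (lend n σ (posv n σ ((badF n σ).min' h)) ((badF n σ).min' h) + 1)
      (posv n σ ((badF n σ).min' h)) := by
  obtain ⟨hx1, hxn, hbad⟩ := min'_badF_mem h
  set x := (badF n σ).min' h with hx
  set q := posv n σ x with hq
  have hqm : 1 ≤ q ∧ q ≤ n := posv_mem σ hx1 hxn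
  have hwq : wrd n σ q = x := wrd_posv σ hx1 hxn
  obtain ⟨hLle, hLpos, hLgr⟩ := lend_key n σ q x
  set L := lend n σ q x with hL
  have hRgt : x < wrd n σ (q + 1) := by
    by_cases hc : q + 1 ≤ n
    · rcases Nat.lt_or_ge x (wrd n σ (q + 1)) with h1 | h1
      · exact h1
      · exfalso
        have h2 : wrd n σ (q + 1) = x := by omega
        have := wrd_inj σ (by omega : 1 ≤ q + 1) hc hqm.1 hqm.2 (by rw [h2, hwq])
        omega
    · rw [wrd_out σ (by omega)]
      omega
  have hnotL : ¬ x < wrd n σ (q - 1) := by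
    unfold bad at hbad
    rw [← hq] at hbad
    by_contra hc
    exact hbad (iff_of_true hc hRgt)
  have hq2 : 2 ≤ q := by
    by_contra hc
    have h1 : q = 1 := by omega
    rw [h1, show (1 : ℕ) - 1 = 0 from rfl, wrd_out σ (by omega)] at hnotL
    omega
  have hwqm : wrd n σ (q - 1) < x := by
    have hne : wrd n σ (q - 1) ≠ x := by
      intro hc
      have := wrd_inj σ (by omega : 1 ≤ q - 1) (by omega) hqm.1 hqm.2 (by rw [hc, hwq])
      omega
    omega
  have hLlt : L < q - 1 := by
    rcases Nat.lt_or_ge L (q - 1) with h1 | h1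
    · exact h1
    · exfalso
      have hLe : L = q - 1 := by omega
      have := hLpos (by omega)
      rw [hLe] at this
      omega
  have hPL : x < wrd n σ L := by
    rcases Nat.eq_zero_or_pos L with h0 | h0
    · rw [h0, wrd_out σ (by omega)]; omega
    · exact hLpos (by omega)
  have hsm : ∀ i, L < i → i < q → wrd n σ i < x := by
    intro i h1 h2
    have h3 := hLgr h1 (by omega)
    have hne : wrd n σ i ≠ x := by
      intro hc
      have := wrd_inj σ (by omega : 1 ≤ i) (by omega) hqm.1 hqm.2 (by rw [hc, hwq])
      omega
    omega
  refine ⟨hx1, hxn, by omega, by omega, hqm.2, hwq, ?_, ?_, hRgt⟩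
  · intro i h1 h2
    exact hsm i (by omega) h2
  · rw [show L + 1 - 1 = L by omega]
    exact hPL

end PsiLemmas

lemma min'_eq_of_eq {s t : Finset ℕ} (E : s = t) (hs : s.Nonempty) (ht : t.Nonempty) :
    s.min' hs = t.min' ht := by subst E; rfl

section PsiMain

variable {n : ℕ} {σ : Equiv.Perm (Fin n)}

lemma psi_eq_dd (h : (badF n σ).Nonempty)
    (hbr : wrd n σ (posv n σ ((badF n σ).min' h) + 1) < (badF n σ).min' h) :
    psi n σ = σ * cyc n (posv n σ ((badF n σ).min' h) - 1)
      (rend n σ (posv n σ ((badF n σ).min' h)) ((badF n σ).min' h) - 2) := by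
  unfold psi; rw [dif_pos h, if_pos hbr]

lemma psi_eq_da (h : (badF n σ).Nonempty)
    (hbr : ¬ wrd n σ (posv n σ ((badF n σ).min' h) + 1) < (badF n σ).min' h) :
    psi n σ = σ * (cyc n (lend n σ (posv n σ ((badF n σ).min' h)) ((badF n σ).min' h))
      (posv n σ ((badF n σ).min' h) - 1))⁻¹ := by
  unfold psi; rw [dif_pos h, if_neg hbr]

theorem psi_props (h : (badF n σ).Nonempty) :
    badF n (psi n σ) = badF n σ ∧
      (des n σ = des n (psi n σ) + 1 ∨ des n (psi n σ) = des n σ + 1) ∧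
      psi n (psi n σ) = σ := by
  obtain ⟨hx1, hxn, hbad⟩ := min'_badF_mem h
  by_cases hbr : wrd n σ (posv n σ ((badF n σ).min' h) + 1) < (badF n σ).min' h
  · -- double descent case: x hops right
    have c := cfg_dd h hbr
    set x := (badF n σ).min' h with hx
    set q := posv n σ x with hq
    set R := rend n σ q x with hR
    obtain ⟨chx1, chxn, cha, chab, chbn, chwa, chsmall, chleft, chright⟩ := c
    have hpsi : psi n σ = σ * cyc n (q - 1) (R - 1 - 1) := by
      rw [psi_eq_dd h hbr, show R - 2 = R - 1 - 1 by omega]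
    have c : Cfg n σ x q (R - 1) :=
      ⟨chx1, chxn, cha, chab, chbn, chwa, chsmall, chleft, chright⟩
    have hbF : badF n (psi n σ) = badF n σ := by
      rw [hpsi]; exact badF_cfg c
    have hdes : des n σ = des n (psi n σ) + 1 := by
      rw [hpsi]; exact des_cfg c
    refine ⟨hbF, Or.inl hdes, ?_⟩
    have hb2 : (badF n (psi n σ)).Nonempty := by rw [hbF]; exact h
    have hx2 : (badF n (psi n σ)).min' hb2 = x := min'_eq_of_eq hbF hb2 h
    have W := wrd_cyc (σ := σ) cha chab chbn
    have q2 : posv n (psi n σ) x = R - 1 := by rw [hpsi]; exact posv_tau_x c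
    have hWlo : ∀ i, i < q ∨ R - 1 < i → wrd n (psi n σ) i = wrd n σ i := by
      intro i hi; rw [hpsi, W i, if_pos hi]
    have hWmid : ∀ i, q ≤ i → i < R - 1 → wrd n (psi n σ) i = wrd n σ (i + 1) := by
      intro i h1 h2; rw [hpsi, W i, if_neg (by omega), if_neg (by omega)]
    have hbr2 : ¬ wrd n (psi n σ)
        (posv n (psi n σ) ((badF n (psi n σ)).min' hb2) + 1) <
        (badF n (psi n σ)).min' hb2 := by
      rw [hx2, q2, hWlo (R - 1 + 1) (by omega)]
      rw [show R - 1 + 1 = R by omega]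
      have : x < wrd n σ R := by
        rw [show R = R - 1 + 1 by omega]; exact chright
      omega
    have hlend2 : lend n (psi n σ) (R - 1) x = q - 1 := by
      unfold lend
      rw [Nat.findGreatest_eq_iff]
      refine ⟨by omega, ?_, ?_⟩
      · intro _
        rw [hWlo (q - 1) (by omega)]
        exact chleft
      · intro j h1 h2
        rw [hWmid j (by omega) (by omega)]
        have := chsmall (j + 1) (by omega) (by omega)
        omega
    rw [psi_eq_da hb2 hbr2, hx2, q2, hlend2, hpsi]
    rw [show R - 1 - 1 = R - 1 - 1 from rfl]
    exact mul_inv_cancel_right _ _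
  · -- double ascent case: x hops left
    have c' := cfg_da h hbr
    set x := (badF n σ).min' h with hx
    set q := posv n σ x with hq
    set L := lend n σ q x with hL
    have hpsi : psi n σ = σ * (cyc n L (q - 1))⁻¹ := psi_eq_da h hbr
    have c2 : Cfg n (psi n σ) x (L + 1) q := by
      have := cfg'_cfg c'
      rw [show L + 1 - 1 = L by omega] at this
      rw [hpsi]
      exact this
    obtain ⟨chx1, chxn, cha, chab, chbn, chwa, chsmall, chleft, chright⟩ := c2
    have c2 : Cfg n (psi n σ) x (L + 1) q :=
      ⟨chx1, chxn, cha, chab, chbn, chwa, chsmall, chleft, chright⟩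
    have key : psi n σ * cyc n L (q - 1) = σ := by
      rw [hpsi]; exact inv_mul_cancel_right _ _
    have hbF : badF n (psi n σ) = badF n σ := by
      have := badF_cfg c2
      rw [show L + 1 - 1 = L by omega, key] at this
      exact this.symm
    have hdes : des n (psi n σ) = des n σ + 1 := by
      have := des_cfg c2
      rw [show L + 1 - 1 = L by omega, key] at this
      exact this
    refine ⟨hbF, Or.inr hdes, ?_⟩
    have hb2 : (badF n (psi n σ)).Nonempty := by rw [hbF]; exact h
    have hx2 : (badF n (psi n σ)).min' hb2 = x := min'_eq_of_eq hbF hb2 h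
    have q2 : posv n (psi n σ) x = L + 1 :=
      posv_eq _ (by omega) (by omega) chwa
    have hbr2 : wrd n (psi n σ)
        (posv n (psi n σ) ((badF n (psi n σ)).min' hb2) + 1) <
        (badF n (psi n σ)).min' hb2 := by
      rw [hx2, q2]
      exact chsmall (L + 1 + 1) (by omega) (by omega)
    have hrend2 : rend n (psi n σ) (L + 1) x = q + 1 := by
      unfold rend
      rw [Nat.find_eq_iff]
      refine ⟨⟨by omega, Or.inl chright⟩, ?_⟩
      intro k hk
      rintro ⟨hk1, hk2 | hk2⟩
      · have := chsmall k hk1 (by omega)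
        omega
      · omega
    rw [psi_eq_dd hb2 hbr2, hx2, q2, hrend2]
    rw [show L + 1 - 1 = L by omega, show q + 1 - 2 = q - 1 by omega]
    exact key

end PsiMain

/-- `π` is alternating: `π₁ < π₂ > π₃ < π₄ > ⋯`. -/
def IsAlternating (n : ℕ) (π : Equiv.Perm (Fin n)) : Prop :=
  ∀ i ∈ Finset.Icc 1 (n - 1),
    (Odd i → wrd n π i < wrd n π (i + 1)) ∧ (Even i → wrd n π (i + 1) < wrd n π i)

instance (n : ℕ) : DecidablePred (IsAlternating n) := fun π => by
  unfold IsAlternating; infer_instance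

/-- The `n`-th Euler number, as the number of alternating permutations of `[n]`. -/
def eulerNumber (n : ℕ) : ℕ :=
  (Finset.univ.filter (IsAlternating n)).card

section FixedPoints

variable {n : ℕ} {σ : Equiv.Perm (Fin n)}

lemma not_bad_of_empty (he : badF n σ = ∅) :
    ∀ v, 1 ≤ v → v ≤ n → ¬ bad n σ v := by
  intro v h1 h2 hb
  have : v ∈ badF n σ := by
    unfold badF
    rw [Finset.mem_filter, Finset.mem_Icc]
    exact ⟨⟨h1, h2⟩, hb⟩
  rw [he] at this
  exact absurd this (Finset.notMem_empty v)

lemma sgn_empty (hn : 1 ≤ n) (hnb : ∀ v, 1 ≤ v → v ≤ n → ¬ bad n σ v) :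
    ∀ r, r ≤ n → ((wrd n σ (r + 1) < wrd n σ r) ↔ r % 2 = 0) := by
  intro r
  induction r with
  | zero =>
    intro _
    have h0 : wrd n σ 0 = n + 2 := wrd_out σ (by omega)
    have h1 := wrd_mem σ (le_refl 1) hn
    rw [Nat.zero_add]
    exact iff_of_true (by omega) rfl
  | succ r ih =>
    intro hr
    have ihh := ih (by omega)
    have hv := wrd_mem σ (by omega : 1 ≤ r + 1) (by omega)
    have hp : posv n σ (wrd n σ (r + 1)) = r + 1 := posv_eq σ (by omega) (by omega) rfl
    have hb := hnb (wrd n σ (r + 1)) hv.1 hv.2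
    unfold bad at hb
    rw [not_not, hp, show r + 1 - 1 = r from rfl] at hb
    have hne : wrd n σ (r + 1 + 1) ≠ wrd n σ (r + 1) := by
      by_cases hc : r + 1 + 1 ≤ n
      · intro hh
        have := wrd_inj σ (by omega) hc (by omega) (by omega) hh
        omega
      · rw [wrd_out σ (by omega)]; omega
    omega

lemma empty_not_even (hn : 1 ≤ n) (he : badF n σ = ∅) : n % 2 = 1 := by
  have hs := sgn_empty hn (not_bad_of_empty he) n (le_refl n)
  have h1 : wrd n σ (n + 1) = n + 2 := wrd_out σ (by omega)
  have h2 := wrd_mem σ hn (le_refl n)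
  omega

lemma card_evens (n : ℕ) :
    ((Finset.Icc 1 (n - 1)).filter (fun i => i % 2 = 0)).card = (n - 1) / 2 := by
  have himg : (Finset.Icc 1 ((n - 1) / 2)).image (fun k => 2 * k)
      = (Finset.Icc 1 (n - 1)).filter (fun i => i % 2 = 0) := by
    ext j
    simp only [Finset.mem_image, Finset.mem_filter, Finset.mem_Icc]
    constructor
    · rintro ⟨k, hk, rfl⟩; omega
    · intro hj; exact ⟨j / 2, by omega, by omega⟩
  rw [← himg, Finset.card_image_of_injective _ (by
    intro a b hab
    have h2 : 2 * a = 2 * b := hab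
    omega), Nat.card_Icc]
  omega

lemma empty_des (hn : 1 ≤ n) (he : badF n σ = ∅) : des n σ = (n - 1) / 2 := by
  have hfe : (Finset.Icc 1 (n - 1)).filter (fun i => wrd n σ (i + 1) < wrd n σ i)
      = (Finset.Icc 1 (n - 1)).filter (fun i => i % 2 = 0) := by
    ext i
    simp only [Finset.mem_filter, Finset.mem_Icc]
    constructor <;> rintro ⟨h1, h2⟩ <;>
      exact ⟨h1, by
        have := sgn_empty hn (not_bad_of_empty he) i (by omega)
        omega⟩
  rw [des, hfe]
  exact card_evens n

lemma empty_alt (hn : 1 ≤ n) (he : badF n σ = ∅) : IsAlternating n σ := by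
  intro i hi
  rw [Finset.mem_Icc] at hi
  have hs := sgn_empty hn (not_bad_of_empty he) i (by omega)
  have hne : wrd n σ i ≠ wrd n σ (i + 1) := by
    intro hh
    have := wrd_inj σ (by omega) (by omega) (by omega) (by omega) hh
    omega
  constructor
  · intro ho; rw [Nat.odd_iff] at ho; omega
  · intro hev; rw [Nat.even_iff] at hev; omega

lemma alt_empty (hn : 1 ≤ n) (hodd : n % 2 = 1) (halt : IsAlternating n σ) :
    badF n σ = ∅ := by
  have hs : ∀ i, i ≤ n → ((wrd n σ (i + 1) < wrd n σ i) ↔ i % 2 = 0) := by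
    intro i hi
    rcases Nat.eq_zero_or_pos i with rfl | hipos
    · have h0 : wrd n σ 0 = n + 2 := wrd_out σ (by omega)
      have h1 := wrd_mem σ (le_refl 1) hn
      show (wrd n σ (0 + 1) < wrd n σ 0) ↔ 0 % 2 = 0
      rw [Nat.zero_add, h0]
      exact iff_of_true (by omega) rfl
    · rcases Nat.lt_or_ge i n with hin | hin
      · have halt' := halt i (Finset.mem_Icc.mpr ⟨by omega, by omega⟩)
        have hne : wrd n σ i ≠ wrd n σ (i + 1) := by
          intro hh
          have := wrd_inj σ (by omega) (by omega) (by omega) (by omega) hh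
          omega
        rcases Nat.even_or_odd i with hev | ho
        · have h2 := halt'.2 hev
          rw [Nat.even_iff] at hev
          exact iff_of_true h2 hev
        · have h2 := halt'.1 ho
          rw [Nat.odd_iff] at ho
          exact iff_of_false (by omega) (by omega)
      · have hie : i = n := by omega
        have h1 : wrd n σ (i + 1) = n + 2 := wrd_out σ (by omega)
        have h2 := wrd_mem σ (by omega : 1 ≤ i) (by omega)
        exact iff_of_false (by omega) (by omega)
  rw [Finset.eq_empty_iff_forall_notMem]
  intro v hv
  unfold badF at hv
  rw [Finset.mem_filter, Finset.mem_Icc] at hv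
  obtain ⟨⟨h1, h2⟩, hb⟩ := hv
  have hq := posv_mem σ h1 h2
  have hwq : wrd n σ (posv n σ v) = v := wrd_posv σ h1 h2
  have hs1 := hs (posv n σ v - 1) (by omega)
  have hs2 := hs (posv n σ v) (by omega)
  rw [show posv n σ v - 1 + 1 = posv n σ v by omega, hwq] at hs1
  rw [hwq] at hs2
  have hne : wrd n σ (posv n σ v + 1) ≠ v := by
    by_cases hc : posv n σ v + 1 ≤ n
    · intro hh
      have := wrd_inj σ (by omega) hc hq.1 hq.2 (by rw [hh, hwq])
      omega
    · rw [wrd_out σ (by omega)]; omega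
  unfold bad at hb
  apply hb
  omega

end FixedPoints

theorem eulerian_neg_one (n : ℕ) (hn : 1 ≤ n) :
    (∑ π : Equiv.Perm (Fin n), (-1 : ℤ) ^ des n π) =
      if Odd n then (-1 : ℤ) ^ ((n - 1) / 2) * eulerNumber n else 0 := by
  classical
  have key : ∀ σ : Equiv.Perm (Fin n), badF n σ ≠ ∅ →
      badF n (psi n σ) = badF n σ ∧
        (des n σ = des n (psi n σ) + 1 ∨ des n (psi n σ) = des n σ + 1) ∧
        psi n (psi n σ) = σ :=
    fun σ hσ => psi_props (Finset.nonempty_iff_ne_empty.mpr hσ)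
  have hsplit := Finset.sum_filter_add_sum_filter_not Finset.univ
    (fun σ : Equiv.Perm (Fin n) => badF n σ = ∅) (fun σ => (-1 : ℤ) ^ des n σ)
  have hzero : ∑ σ ∈ Finset.univ.filter
      (fun σ : Equiv.Perm (Fin n) => ¬ badF n σ = ∅), (-1 : ℤ) ^ des n σ = 0 := by
    apply Finset.sum_involution (g := fun σ _ => psi n σ)
    · intro σ ha
      have hσ : badF n σ ≠ ∅ := (Finset.mem_filter.mp ha).2
      obtain ⟨_, hdes, _⟩ := key σ hσ
      rcases hdes with h1 | h1 <;> rw [h1, pow_succ] <;> ring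
    · intro σ ha _
      have hσ : badF n σ ≠ ∅ := (Finset.mem_filter.mp ha).2
      obtain ⟨_, hdes, _⟩ := key σ hσ
      intro heq
      rw [heq] at hdes
      omega
    · intro σ ha
      have hσ : badF n σ ≠ ∅ := (Finset.mem_filter.mp ha).2
      obtain ⟨hbF, _, _⟩ := key σ hσ
      rw [Finset.mem_filter]
      exact ⟨Finset.mem_univ _, by rw [hbF]; exact hσ⟩
    · intro σ ha
      exact (key σ (Finset.mem_filter.mp ha).2).2.2
  rw [← hsplit, hzero, add_zero]
  by_cases hodd : Odd n
  · rw [if_pos hodd]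
    have hmod : n % 2 = 1 := Nat.odd_iff.mp hodd
    have hset : Finset.univ.filter (fun σ : Equiv.Perm (Fin n) => badF n σ = ∅)
        = Finset.univ.filter (IsAlternating n) := by
      ext σ
      simp only [Finset.mem_filter, Finset.mem_univ, true_and]
      exact ⟨fun he => empty_alt hn he, fun ha => alt_empty hn hmod ha⟩
    rw [hset]
    rw [Finset.sum_congr rfl (fun σ hσ => by
      rw [empty_des hn (alt_empty hn hmod (Finset.mem_filter.mp hσ).2)])]
    rw [Finset.sum_const, nsmul_eq_mul, mul_comm, eulerNumber]
  · rw [if_neg hodd]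
    have hset : Finset.univ.filter (fun σ : Equiv.Perm (Fin n) => badF n σ = ∅) = ∅ := by
      rw [Finset.filter_eq_empty_iff]
      intro σ _ hp
      have := empty_not_even hn hp
      rw [Nat.odd_iff] at hodd
      omega
    rw [hset, Finset.sum_empty]
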